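/- For every ℓ ∈ N, every subset S ⊆ {1,…,ℓ} with S̄ = {1,…,ℓ}\S, and every scenario j ∈ Ω, every point (x, y, z) ∈ P satisfies the big-M (ℓ,S) inequality Σ_{i∈S} y_i + Σ_{i∈S̄} D_{jiℓ} x_i ≥ D_{j1ℓ} (1 − z_j), where D_{jiℓ} = Σ_{p=i}^{ℓ} d_{jp}. -/

import Mathlib

noncomputable section

/-- Cumulative demand of scenario `j` through periods `1,…,t`. -/
def cumD (d : ℕ → ℕ → ℝ) (j t : ℕ) : ℝ := ∑ i ∈ Finset.Icc 1 t, d j i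

/-- Big-M constant `M_i = max_{j ∈ Ω} Σ_{p=i}^n d_{j p}`. -/
def bigM (d : ℕ → ℕ → ℝ) (n m i : ℕ) : ℝ :=
  sSup ((fun j => ∑ p ∈ Finset.Icc i n, d j p) '' Set.Icc 1 m)

/-- Membership in the feasible set `P` of the static probabilistic lot-sizing problem. -/
def memP (d : ℕ → ℕ → ℝ) (n m k : ℕ) (x y z : ℕ → ℝ) : Prop :=
  (∀ i ∈ Finset.Icc 1 n, x i = 0 ∨ x i = 1) ∧
  (∀ i ∈ Finset.Icc 1 n, 0 ≤ y i) ∧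
  (∀ j ∈ Finset.Icc 1 m, z j = 0 ∨ z j = 1) ∧
  (∀ t ∈ Finset.Icc 1 n, ∀ j ∈ Finset.Icc 1 m,
    cumD d j t * (1 - z j) ≤ ∑ i ∈ Finset.Icc 1 t, y i) ∧
  (∑ j ∈ Finset.Icc 1 m, z j ≤ (k : ℝ)) ∧
  (∀ i ∈ Finset.Icc 1 n, y i ≤ bigM d n m i * x i)

/-- the big-M `(ℓ, S)` inequalities are valid for `P`. -/
theorem bigM_ellS_valid (n m k : ℕ) (hn : 1 ≤ n) (hm : 1 ≤ m) (hk : k < m)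
    (d : ℕ → ℕ → ℝ)
    (hd : ∀ j ∈ Finset.Icc 1 m, ∀ i ∈ Finset.Icc 1 n, 0 ≤ d j i)
    (x y z : ℕ → ℝ) (hP : memP d n m k x y z)
    (ℓ : ℕ) (hℓ : ℓ ∈ Finset.Icc 1 n)
    (S : Finset ℕ) (hS : S ⊆ Finset.Icc 1 ℓ)
    (j : ℕ) (hj : j ∈ Finset.Icc 1 m) :
    cumD d j ℓ * (1 - z j) ≤
      ∑ i ∈ S, y i +
      ∑ i ∈ Finset.Icc 1 ℓ \ S, (∑ p ∈ Finset.Icc i ℓ, d j p) * x i := by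

  obtain ⟨hx01, hy0, hz01, hcon, _, hyM⟩ := hP
  simp only [Finset.mem_Icc] at hℓ hj
  have hxnn : ∀ i ∈ Finset.Icc 1 n, 0 ≤ x i := by
    intro i hi; rcases hx01 i hi with h | h <;> simp [h]
  have hyzero : ∀ i ∈ Finset.Icc 1 n, x i = 0 → y i = 0 := by
    intro i hi hx0
    have h1 := hyM i hi
    rw [hx0, mul_zero] at h1
    exact le_antisymm h1 (hy0 i hi)
  have hsubn : Finset.Icc 1 ℓ ⊆ Finset.Icc 1 n := Finset.Icc_subset_Icc le_rfl hℓ.2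
  have hDnn : ∀ i ∈ Finset.Icc 1 ℓ \ S, 0 ≤ (∑ p ∈ Finset.Icc i ℓ, d j p) * x i := by
    intro i hi
    have hi' := Finset.mem_sdiff.1 hi
    apply mul_nonneg
    · apply Finset.sum_nonneg
      intro p hp
      exact hd j (Finset.mem_Icc.2 hj) p (hsubn (Finset.mem_Icc.2
        ⟨le_trans (Finset.mem_Icc.1 hi'.1).1 (Finset.mem_Icc.1 hp).1, (Finset.mem_Icc.1 hp).2⟩))
    · exact hxnn i (hsubn hi'.1)
  set T := (Finset.Icc 1 ℓ \ S).filter (fun i => x i = 1) with hT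
  by_cases hTne : T.Nonempty
  · -- there is some i in the complement with x i = 1
    rcases hz01 j (Finset.mem_Icc.2 hj) with hz | hz
    · -- z j = 0
      set i₀ := T.min' hTne with hi₀def
      have hi₀T : i₀ ∈ T := T.min'_mem hTne
      obtain ⟨hi₀mem, hx₀⟩ := Finset.mem_filter.1 hi₀T
      obtain ⟨hi₀Icc, hi₀S⟩ := Finset.mem_sdiff.1 hi₀mem
      obtain ⟨hi₀1, hi₀ℓ⟩ := Finset.mem_Icc.1 hi₀Icc
      -- split cumD at i₀
      have hsplit : cumD d j ℓ = cumD d j (i₀ - 1) + ∑ p ∈ Finset.Icc i₀ ℓ, d j p := by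
        have h1 : Finset.Icc 1 (i₀ - 1) = Finset.Ioc 0 (i₀ - 1) := by
          rw [← Finset.Icc_add_one_left_eq_Ioc, zero_add]
        have h2 : Finset.Icc i₀ ℓ = Finset.Ioc (i₀ - 1) ℓ := by
          rw [← Finset.Icc_add_one_left_eq_Ioc, Nat.sub_add_cancel hi₀1]
        have h3 : Finset.Icc 1 ℓ = Finset.Ioc 0 ℓ := by
          rw [← Finset.Icc_add_one_left_eq_Ioc, zero_add]
        rw [cumD, cumD, h1, h2, h3,
          Finset.sum_Ioc_consecutive _ (Nat.zero_le _) (le_trans (Nat.sub_le _ _) hi₀ℓ)]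
      -- first sum bound
      have hcon1 : cumD d j (i₀ - 1) ≤ ∑ i ∈ Finset.Icc 1 (i₀ - 1), y i := by
        rcases Nat.eq_or_lt_of_le hi₀1 with h | h
        · simp [cumD, ← h]
        · have ht : i₀ - 1 ∈ Finset.Icc 1 n :=
            Finset.mem_Icc.2 ⟨Nat.le_sub_one_of_lt h, le_trans (Nat.sub_le _ _) (le_trans hi₀ℓ hℓ.2)⟩
          have := hcon (i₀ - 1) ht j (Finset.mem_Icc.2 hj)
          rw [hz] at this; simpa using this
      have hzeroearly : ∀ i ∈ Finset.Icc 1 (i₀ - 1) \ S, y i = 0 := by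
        intro i hi
        obtain ⟨hiIcc, hiS⟩ := Finset.mem_sdiff.1 hi
        obtain ⟨hi1, hi2⟩ := Finset.mem_Icc.1 hiIcc
        have hiℓ : i ∈ Finset.Icc 1 ℓ :=
          Finset.mem_Icc.2 ⟨hi1, le_trans hi2 (le_trans (Nat.sub_le _ _) hi₀ℓ)⟩
        have hnotT : i ∉ T := by
          intro hcontra
          have := T.min'_le i hcontra
          omega
        have hx0 : x i = 0 := by
          rcases hx01 i (hsubn hiℓ) with h | h
          · exact h
          · exact absurd (Finset.mem_filter.2 ⟨Finset.mem_sdiff.2 ⟨hiℓ, hiS⟩, h⟩) hnotT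
        exact hyzero i (hsubn hiℓ) hx0
      have hsum1 : ∑ i ∈ Finset.Icc 1 (i₀ - 1), y i ≤ ∑ i ∈ S, y i := by
        have hsplit2 : ∑ i ∈ Finset.Icc 1 (i₀ - 1), y i
            = ∑ i ∈ Finset.Icc 1 (i₀ - 1) ∩ S, y i := by
          rw [← Finset.sum_inter_add_sum_sdiff (Finset.Icc 1 (i₀ - 1)) S y,
            Finset.sum_eq_zero hzeroearly, add_zero]
        rw [hsplit2]
        apply Finset.sum_le_sum_of_subset_of_nonneg (Finset.inter_subset_right)
        intro i hi _
        exact hy0 i (hsubn (hS hi))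
      have hsum2 : ∑ p ∈ Finset.Icc i₀ ℓ, d j p
          ≤ ∑ i ∈ Finset.Icc 1 ℓ \ S, (∑ p ∈ Finset.Icc i ℓ, d j p) * x i := by
        have := Finset.single_le_sum hDnn hi₀mem
        rw [hx₀, mul_one] at this
        exact this
      rw [hz]
      calc cumD d j ℓ * (1 - 0) = cumD d j (i₀ - 1) + ∑ p ∈ Finset.Icc i₀ ℓ, d j p := by
            rw [hsplit]; ring
        _ ≤ ∑ i ∈ S, y i + ∑ i ∈ Finset.Icc 1 ℓ \ S, (∑ p ∈ Finset.Icc i ℓ, d j p) * x i :=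
            add_le_add (le_trans hcon1 hsum1) hsum2
    · -- z j = 1 : LHS = 0
      rw [hz]
      have h1 : cumD d j ℓ * (1 - 1) = 0 := by ring
      rw [h1]
      apply add_nonneg
      · exact Finset.sum_nonneg fun i hi => hy0 i (hsubn (hS hi))
      · exact Finset.sum_nonneg hDnn
  · -- T empty: all x i = 0 on complement, so y i = 0 there
    have hxz : ∀ i ∈ Finset.Icc 1 ℓ \ S, x i = 0 := by
      intro i hi
      rcases hx01 i (hsubn (Finset.mem_sdiff.1 hi).1) with h | h
      · exact h
      · exact absurd ⟨i, Finset.mem_filter.2 ⟨hi, h⟩⟩ hTne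
    have hsum2 : ∑ i ∈ Finset.Icc 1 ℓ \ S, (∑ p ∈ Finset.Icc i ℓ, d j p) * x i = 0 :=
      Finset.sum_eq_zero fun i hi => by rw [hxz i hi, mul_zero]
    have hyz : ∀ i ∈ Finset.Icc 1 ℓ \ S, y i = 0 := fun i hi =>
      hyzero i (hsubn (Finset.mem_sdiff.1 hi).1) (hxz i hi)
    have hsum1 : ∑ i ∈ Finset.Icc 1 ℓ, y i = ∑ i ∈ S, y i := by
      rw [← Finset.sum_inter_add_sum_sdiff (Finset.Icc 1 ℓ) S y,
        Finset.sum_eq_zero hyz, add_zero, Finset.inter_eq_right.2 hS]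
    have := hcon ℓ (Finset.mem_Icc.2 hℓ) j (Finset.mem_Icc.2 hj)
    rw [hsum2, add_zero, ← hsum1]
    exact this


end
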